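/- Let R be a domain, n ≥ 0, and B = R[x₁^{±1},…,xₙ^{±1}] the Laurent polynomial ring in n variables over R. Then the image of R in B (the bottom R-subalgebra) is pre-factorially closed in B: for all nonzero f, g ∈ B with f·g in the image of R, there exists a unit u of B such that u·f and u⁻¹·g lie in the image of R. -/

import Mathlib

/-- A subset `A` of `B` is pre-factorially closed (pfc) in `B` if for all nonzero
`a, b ∈ B` with `a * b ∈ A` there is a unit `u` of `B` with `u*a ∈ A` and `u⁻¹*b ∈ A`. -/
def IsPfcSet {B : Type*} [CommRing B] (A : Set B) : Prop :=
  ∀ a b : B, a ≠ 0 → b ≠ 0 → a * b ∈ A →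
    ∃ u : Bˣ, (u : B) * a ∈ A ∧ ((u⁻¹ : Bˣ) : B) * b ∈ A

open Finsupp in
/-- If a product of two nonzero elements of an `AddMonoidAlgebra` over a `TwoUniqueSums`
type has support contained in a singleton, both factors have singleton support. -/
theorem aux_support_card_eq_one {R A : Type*} [Semiring R] [NoZeroDivisors R] [AddMonoid A]
    [TwoUniqueSums A] {f g : AddMonoidAlgebra R A} (hf : f ≠ 0) (hg : g ≠ 0)
    {c : A} (h : (f * g).coeff.support ⊆ {c}) :
    f.coeff.support.card = 1 ∧ g.coeff.support.card = 1 := by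
  classical
  have hf1 : 1 ≤ f.coeff.support.card :=
    Finset.card_pos.mpr (support_nonempty_iff.mpr (mt AddMonoidAlgebra.coeff_eq_zero.mp hf))
  have hg1 : 1 ≤ g.coeff.support.card :=
    Finset.card_pos.mpr (support_nonempty_iff.mpr (mt AddMonoidAlgebra.coeff_eq_zero.mp hg))
  by_contra hcon
  have hlt : 1 < f.coeff.support.card * g.coeff.support.card := by
    rcases Nat.lt_or_ge 1 (f.coeff.support.card * g.coeff.support.card) with h1 | h1
    · exact h1
    · have heq : f.coeff.support.card * g.coeff.support.card = 1 :=
        le_antisymm h1 (Nat.one_le_iff_ne_zero.mpr (Nat.mul_ne_zero (by omega) (by omega)))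
      exact absurd ⟨by nlinarith, by nlinarith⟩ hcon
  obtain ⟨p1, hp1, p2, hp2, hne, hu1, hu2⟩ :=
    TwoUniqueSums.uniqueAdd_of_one_lt_card (A := f.coeff.support) (B := g.coeff.support) hlt
  rw [Finset.mem_product] at hp1 hp2
  have key : ∀ (p : A × A), p.1 ∈ f.coeff.support → p.2 ∈ g.coeff.support →
      UniqueAdd f.coeff.support g.coeff.support p.1 p.2 → p.1 + p.2 = c := by
    intro p h1 h2 hu
    have : (f * g).coeff (p.1 + p.2) = f.coeff p.1 * g.coeff p.2 :=
      AddMonoidAlgebra.coeff_mul_add_of_uniqueAdd hu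
    have hne0 : (f * g).coeff (p.1 + p.2) ≠ 0 := by
      rw [this]
      exact mul_ne_zero (mem_support_iff.mp h1) (mem_support_iff.mp h2)
    have := h (mem_support_iff.mpr hne0)
    simpa using this
  have e1 : p1.1 + p1.2 = c := key p1 hp1.1 hp1.2 hu1
  have e2 : p2.1 + p2.2 = c := key p2 hp2.1 hp2.2 hu2
  have := hu1 hp2.1 hp2.2 (by rw [e1, e2])
  exact hne (Prod.ext this.1 this.2).symm

/-- The image of `R` in the Laurent polynomial ring `B = R[x₁^{±1},…,xₙ^{±1}]` is pfc in `B`. -/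
theorem range_algebraMap_isPfc (R : Type*) [CommRing R] [IsDomain R] (n : ℕ) :
    IsPfcSet (Set.range (algebraMap R (AddMonoidAlgebra R (Fin n → ℤ)))) := by
  classical
  intro f g hf hg hmem
  obtain ⟨c, hc⟩ := hmem
  have hmul : f * g = AddMonoidAlgebra.single 0 c := by
    rw [← hc, AddMonoidAlgebra.coe_algebraMap]; simp
  have hsupp : (f * g).coeff.support ⊆ {0} := by
    rw [hmul, AddMonoidAlgebra.coeff_single]; exact Finsupp.support_single_subset
  obtain ⟨hfc, hgc⟩ := aux_support_card_eq_one hf hg hsupp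
  obtain ⟨a, r, hr, hfs'⟩ := Finsupp.card_support_eq_one'.mp hfc
  have hfs : f = AddMonoidAlgebra.single a r := AddMonoidAlgebra.coeff_injective hfs'
  obtain ⟨b, s, hs, hgs'⟩ := Finsupp.card_support_eq_one'.mp hgc
  have hgs : g = AddMonoidAlgebra.single b s := AddMonoidAlgebra.coeff_injective hgs'
  rw [hfs, hgs, AddMonoidAlgebra.single_mul_single] at hmul
  have hab : a + b = 0 := by
    rcases AddMonoidAlgebra.single_inj.mp hmul with ⟨h1, _⟩ | ⟨h1, _⟩
    · exact h1
    · exact absurd h1 (mul_ne_zero hr hs)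
  have hone : ∀ x : Fin n → ℤ, (AddMonoidAlgebra.single x 1 : AddMonoidAlgebra R (Fin n → ℤ)) *
      AddMonoidAlgebra.single (-x) 1 = 1 := by
    intro x
    rw [AddMonoidAlgebra.single_mul_single, add_neg_cancel, mul_one, AddMonoidAlgebra.one_def]
  refine ⟨⟨AddMonoidAlgebra.single (-a) 1, AddMonoidAlgebra.single a 1,
    by simpa using hone (-a), hone a⟩, ⟨r, ?_⟩, ⟨s, ?_⟩⟩
  · show algebraMap R (AddMonoidAlgebra R (Fin n → ℤ)) r =
      AddMonoidAlgebra.single (-a) 1 * f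
    rw [hfs, AddMonoidAlgebra.single_mul_single, neg_add_cancel, one_mul]
    simp [AddMonoidAlgebra.coe_algebraMap]
  · show algebraMap R (AddMonoidAlgebra R (Fin n → ℤ)) s =
      AddMonoidAlgebra.single a 1 * g
    have hb : b = -a := (neg_eq_of_add_eq_zero_right hab).symm
    rw [hgs, hb, AddMonoidAlgebra.single_mul_single, add_neg_cancel, one_mul]
    simp [AddMonoidAlgebra.coe_algebraMap]
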